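/- Let T_R = ([n], E_red) and T_B = ([n], E_blue) be two tournaments (a red one and a blue one) on the vertex set {1,...,n} (n ≥ 1). Then there exists a vertex ν (a king) such that every vertex j is reachable from ν by a rainbow directed path of length at most 2, i.e., for every j either ν = j, or (ν,j) ∈ E_red, or (ν,j) ∈ E_blue, or there exists k with (ν,k) ∈ E_red and (k,j) ∈ E_blue, or there exists k with (ν,k) ∈ E_blue and (k,j) ∈ E_red. -/
import Mathlib


/-- For a red tournament `T_R` and a blue tournament `T_B` on `{1,…,n}`
(n ≥ 1) there is a king `ν`: every `j` is reachable from `ν` by a rainbow directed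
path of length at most 2 (a single red or blue edge, or a red edge followed by a
blue edge, or a blue edge followed by a red edge, or the trivial path). -/
theorem rainbow_king (n : ℕ) (hn : 1 ≤ n)
    (Ered Eblue : Fin n → Fin n → Prop)
    (hTRirr : ∀ i, ¬ Ered i i)
    (hTR : ∀ i j : Fin n, i ≠ j → (Ered i j ↔ ¬ Ered j i))
    (hTBirr : ∀ i, ¬ Eblue i i)
    (hTB : ∀ i j : Fin n, i ≠ j → (Eblue i j ↔ ¬ Eblue j i)) :
    ∃ ν : Fin n, ∀ j : Fin n,
      ν = j ∨ Ered ν j ∨ Eblue ν j ∨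
        (∃ k : Fin n, Ered ν k ∧ Eblue k j) ∨
        (∃ k : Fin n, Eblue ν k ∧ Ered k j) := by
  classical
  have hne : (Finset.univ : Finset (Fin n)).Nonempty := ⟨⟨0, hn⟩, Finset.mem_univ _⟩
  set N : Fin n → Finset (Fin n) :=
    fun v => Finset.univ.filter (fun j => v ≠ j ∧ (Ered v j ∨ Eblue v j)) with hN
  obtain ⟨ν, -, hν⟩ := Finset.exists_max_image Finset.univ (fun v => (N v).card) hne
  refine ⟨ν, fun j => ?_⟩
  by_contra h
  push_neg at h
  obtain ⟨hj1, hj2, hj3, hj4, hj5⟩ := h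
  have hsub : N ν ⊆ N j := by
    intro k hk
    simp only [hN, Finset.mem_filter, Finset.mem_univ, true_and] at hk ⊢
    obtain ⟨hk1, hk2⟩ := hk
    have hkj : k ≠ j := by
      rintro rfl
      exact hk2.elim hj2 hj3
    refine ⟨Ne.symm hkj, ?_⟩
    rcases hk2 with hr | hb
    · -- ν →red k, so j →blue k (else k →blue j gives a rainbow path)
      have hnb : ¬ Eblue k j := fun hb' => hj4 k hr hb'
      right
      have := (hTB j k (Ne.symm hkj)).mpr
      exact this (fun hb' => hnb hb')
    · have hnr : ¬ Ered k j := fun hr' => hj5 k hb hr'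
      left
      exact (hTR j k (Ne.symm hkj)).mpr (fun hr' => hnr hr')
  have hνmem : ν ∈ N j := by
    simp only [hN, Finset.mem_filter, Finset.mem_univ, true_and]
    refine ⟨Ne.symm hj1, Or.inl ?_⟩
    exact (hTR j ν (Ne.symm hj1)).mpr (fun hr' => hj2 hr')
  have hνnot : ν ∉ N ν := by
    simp [hN]
  have hlt : (N ν).card < (N j).card :=
    Finset.card_lt_card ⟨hsub, fun hsub' => hνnot (hsub' hνmem)⟩
  exact absurd (hν j (Finset.mem_univ j)) (not_le.mpr hlt)
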